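/- Let A be a unital C*-algebra, let I be a closed two-sided ideal of A, and let (e_α) be a quasi-central approximate unit for I indexed by a nonempty directed preordered set. Then for all a, b ∈ A, the limit superior along the net of ‖e_α·a + (1 − e_α)·b‖ is at most max(‖a‖, dist(b, I)), where dist(b, I) is the distance from b to the set I. -/

import Mathlib

open Filter Polynomial

section Aux
variable {A : Type*} [CStarAlgebra A] [PartialOrder A] [StarOrderedRing A]

lemma myAlgNonneg {x : ℝ} (hx : 0 ≤ x) : 0 ≤ algebraMap ℝ A x := by
  have h1 : algebraMap ℝ A x = star (algebraMap ℝ A (Real.sqrt x)) * algebraMap ℝ A (Real.sqrt x) := by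
    have : star (algebraMap ℝ A (Real.sqrt x)) = algebraMap ℝ A (Real.sqrt x) := by
      rw [← algebraMap_star_comm, star_trivial]
    rw [this, ← map_mul, Real.mul_self_sqrt hx]
  rw [h1]
  exact star_mul_self_nonneg _

lemma myLeAlg {h : A} (hh : IsSelfAdjoint h) {K : ℝ} (hK : ‖h‖ ≤ K) :
    h ≤ algebraMap ℝ A K := by
  refine le_trans hh.le_algebraMap_norm_self ?_
  have := myAlgNonneg (A := A) (sub_nonneg.mpr hK)
  rw [map_sub] at this
  exact sub_nonneg.mp this

lemma myNormOne : ‖(1 : A)‖ ≤ 1 := by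
  have h := CStarRing.norm_star_mul_self (x := (1 : A))
  simp only [star_one, one_mul] at h
  nlinarith [norm_nonneg (1 : A)]

lemma myNormPow (s : A) (hs : ‖s‖ ≤ 1) (n : ℕ) : ‖s ^ n‖ ≤ 1 := by
  induction n with
  | zero => simpa using myNormOne
  | succ n ih =>
    rw [pow_succ]
    calc ‖s ^ n * s‖ ≤ ‖s ^ n‖ * ‖s‖ := norm_mul_le _ _
      _ ≤ 1 * 1 := mul_le_mul ih hs (norm_nonneg s) zero_le_one
      _ = 1 := one_mul 1

lemma myCommPow (s x : A) (hs : ‖s‖ ≤ 1) : ∀ n : ℕ,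
    ‖s ^ n * x - x * s ^ n‖ ≤ n * ‖s * x - x * s‖ := by
  intro n
  induction n with
  | zero => simp
  | succ n ih =>
    have hc : s ^ n * s = s * s ^ n := by rw [← pow_succ, ← pow_succ']
    have key : s ^ (n + 1) * x - x * s ^ (n + 1)
        = s * (s ^ n * x - x * s ^ n) + (s * x - x * s) * s ^ n := by
      rw [pow_succ, hc]; noncomm_ring
    calc ‖s ^ (n + 1) * x - x * s ^ (n + 1)‖
        ≤ ‖s * (s ^ n * x - x * s ^ n)‖ + ‖(s * x - x * s) * s ^ n‖ := by
          rw [key]; exact norm_add_le _ _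
      _ ≤ ‖s‖ * ‖s ^ n * x - x * s ^ n‖ + ‖s * x - x * s‖ * ‖s ^ n‖ :=
          add_le_add (norm_mul_le _ _) (norm_mul_le _ _)
      _ ≤ 1 * (n * ‖s * x - x * s‖) + ‖s * x - x * s‖ * 1 :=
          add_le_add (mul_le_mul hs ih (norm_nonneg _) zero_le_one)
            (mul_le_mul_of_nonneg_left (myNormPow s hs n) (norm_nonneg _))
      _ = (n + 1 : ℕ) * ‖s * x - x * s‖ := by push_cast; ring

lemma myCommAeval (q : ℝ[X]) : ∃ C : ℝ, 0 ≤ C ∧ ∀ s x : A, ‖s‖ ≤ 1 →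
    ‖(aeval s q) * x - x * (aeval s q)‖ ≤ C * ‖s * x - x * s‖ := by
  induction q using Polynomial.induction_on' with
  | add p q hp hq =>
    obtain ⟨C₁, hC₁, h₁⟩ := hp
    obtain ⟨C₂, hC₂, h₂⟩ := hq
    refine ⟨C₁ + C₂, by positivity, fun s x hs => ?_⟩
    have key : aeval s (p + q) * x - x * aeval s (p + q)
        = (aeval s p * x - x * aeval s p) + (aeval s q * x - x * aeval s q) := by
      rw [map_add]; noncomm_ring
    calc ‖aeval s (p + q) * x - x * aeval s (p + q)‖
        ≤ ‖aeval s p * x - x * aeval s p‖ + ‖aeval s q * x - x * aeval s q‖ := by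
          rw [key]; exact norm_add_le _ _
      _ ≤ C₁ * ‖s * x - x * s‖ + C₂ * ‖s * x - x * s‖ := add_le_add (h₁ s x hs) (h₂ s x hs)
      _ = (C₁ + C₂) * ‖s * x - x * s‖ := by ring
  | monomial n c =>
    refine ⟨|c| * n, by positivity, fun s x hs => ?_⟩
    have key : aeval s (monomial n c) * x - x * aeval s (monomial n c)
        = c • (s ^ n * x - x * s ^ n) := by
      rw [aeval_monomial, Algebra.smul_def, mul_sub, mul_assoc, ← mul_assoc x,
        ← Algebra.commutes c x, mul_assoc]
    rw [key, norm_smul, Real.norm_eq_abs]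
    calc |c| * ‖s ^ n * x - x * s ^ n‖ ≤ |c| * (n * ‖s * x - x * s‖) := by
          gcongr; exact myCommPow s x hs n
      _ = |c| * n * ‖s * x - x * s‖ := by ring

lemma mySqrtApprox {ε : ℝ} (hε : 0 < ε) :
    ∃ q : ℝ[X], ∀ y ∈ Set.Icc (0:ℝ) 1, |Real.sqrt y - q.eval y| ≤ ε := by
  set f : C(Set.Icc (0:ℝ) 1, ℝ) := ⟨fun y => Real.sqrt y, by fun_prop⟩ with hf
  have hmem : f ∈ (polynomialFunctions (Set.Icc (0:ℝ) 1)).topologicalClosure := by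
    rw [polynomialFunctions_closure_eq_top]; trivial
  rw [← SetLike.mem_coe, Subalgebra.topologicalClosure_coe] at hmem
  rw [Metric.mem_closure_iff] at hmem
  obtain ⟨g, hg, hdist⟩ := hmem ε hε
  rw [polynomialFunctions_coe] at hg
  obtain ⟨q, rfl⟩ := hg
  refine ⟨q, fun y hy => ?_⟩
  calc |Real.sqrt y - q.eval y| = dist (f ⟨y, hy⟩) ((Polynomial.toContinuousMapOnAlgHom _ q) ⟨y, hy⟩) := by
        simp [hf, Real.dist_eq, Polynomial.toContinuousMapOnAlgHom_apply,
          Polynomial.toContinuousMapOn_apply, Polynomial.toContinuousMap_apply]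
    _ ≤ dist f ((Polynomial.toContinuousMapOnAlgHom _ q)) := ContinuousMap.dist_apply_le_dist _
    _ ≤ ε := (hdist).le

lemma mySpec [Nontrivial A] {t : A} (ht0 : 0 ≤ t) (htn : ‖t‖ ≤ 1) :
    spectrum ℝ t ⊆ Set.Icc (0:ℝ) 1 := fun y hy =>
  ⟨spectrum_nonneg_of_nonneg ht0 hy, by
    have h1 := spectrum.norm_le_norm_of_mem hy
    rw [Real.norm_eq_abs] at h1
    linarith [le_abs_self y]⟩

lemma myTendstoSqrtComm [Nontrivial A] {ι : Type*} [Preorder ι] (s : ι → A) (x : A)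
    (hpos : ∀ α, 0 ≤ s α) (hn : ∀ α, ‖s α‖ ≤ 1)
    (h : Tendsto (fun α => ‖s α * x - x * s α‖) atTop (nhds 0)) :
    Tendsto (fun α => ‖cfc Real.sqrt (s α) * x - x * cfc Real.sqrt (s α)‖) atTop (nhds 0) := by
  rw [Metric.tendsto_nhds]
  intro ε hε
  have hx1 : (0:ℝ) < ‖x‖ + 1 := by positivity
  obtain ⟨q, hq⟩ := mySqrtApprox (ε := ε / (4 * (‖x‖ + 1))) (by positivity)
  obtain ⟨C, hC0, hC⟩ := myCommAeval (A := A) q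
  have hev := (Metric.tendsto_nhds.mp h) (ε / (2 * (C + 1))) (by positivity)
  filter_upwards [hev] with α hα
  have hsa : IsSelfAdjoint (s α) := .of_nonneg (hpos α)
  set r := cfc Real.sqrt (s α) with hr
  set p := aeval (s α) q with hp
  have hnd : r - p = cfc (fun y => Real.sqrt y - q.eval y) (s α) := by
    rw [cfc_sub _ _ (s α) (by fun_prop) (by fun_prop), cfc_polynomial _ (s α) hsa]
  have hrp : ‖r - p‖ ≤ ε / (4 * (‖x‖ + 1)) := by
    rw [hnd]
    refine norm_cfc_le (by positivity) fun y hy => ?_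
    rw [Real.norm_eq_abs]
    exact hq y (mySpec (hpos α) (hn α) hy)
  have hkey : r * x - x * r = ((r - p) * x - x * (r - p)) + (p * x - x * p) := by
    noncomm_ring
  have hcomm : ‖p * x - x * p‖ ≤ C * ‖s α * x - x * s α‖ := hC (s α) x (hn α)
  rw [Real.dist_eq, sub_zero, abs_of_nonneg (norm_nonneg _)] at hα ⊢
  calc ‖r * x - x * r‖
      ≤ ‖(r - p) * x‖ + ‖x * (r - p)‖ + ‖p * x - x * p‖ := by
        rw [hkey]
        exact (norm_add_le _ _).trans (by gcongr; exact norm_sub_le _ _)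
    _ ≤ ‖r - p‖ * ‖x‖ + ‖x‖ * ‖r - p‖ + C * ‖s α * x - x * s α‖ :=
        add_le_add (add_le_add (norm_mul_le _ _) (norm_mul_le _ _)) hcomm
    _ < ε := by
        have h1 : ‖r - p‖ * ‖x‖ ≤ ε / (4 * (‖x‖ + 1)) * ‖x‖ :=
          mul_le_mul_of_nonneg_right hrp (norm_nonneg x)
        have h2 : ε / (4 * (‖x‖ + 1)) * ‖x‖ ≤ ε / 4 := by
          rw [div_mul_eq_mul_div, div_le_div_iff₀ (by positivity) (by norm_num)]
          nlinarith [norm_nonneg x]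
        have h3 : C * ‖s α * x - x * s α‖ ≤ C * (ε / (2 * (C + 1))) :=
          mul_le_mul_of_nonneg_left hα.le hC0
        have h4 : C * (ε / (2 * (C + 1))) < ε / 2 := by
          rw [mul_div_assoc'] at *
          rw [div_lt_div_iff₀ (by positivity) (by norm_num)]
          nlinarith
        have h1' : ‖x‖ * ‖r - p‖ ≤ ε / 4 := by
          rw [mul_comm]; exact h1.trans h2
        linarith [h1.trans h2]

lemma myS [Nontrivial A] {t : A} (ht0 : 0 ≤ t) (ht1 : t ≤ 1) :
    0 ≤ t - t ^ 2 ∧ ‖t - t ^ 2‖ ≤ 1 := by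
  have htn : ‖t‖ ≤ 1 := (CStarAlgebra.norm_le_one_iff_of_nonneg t ht0).mpr ht1
  have hsa : IsSelfAdjoint t := .of_nonneg ht0
  have heq : cfc (fun y : ℝ => y - y ^ 2) t = t - t ^ 2 := by
    rw [cfc_sub (fun y : ℝ => y) (fun y : ℝ => y ^ 2) t (by fun_prop) (by fun_prop),
      cfc_id' (R := ℝ) t, cfc_pow_id t 2]
  constructor
  · rw [← heq]
    refine cfc_nonneg fun y hy => ?_
    obtain ⟨h0, h1⟩ := mySpec ht0 htn hy
    nlinarith
  · rw [← heq]
    refine norm_cfc_le zero_le_one fun y hy => ?_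
    obtain ⟨h0, h1⟩ := mySpec ht0 htn hy
    rw [Real.norm_eq_abs, abs_le]
    constructor <;> nlinarith

lemma myKey [Nontrivial A] (t a c : A) (ht0 : 0 ≤ t) (ht1 : t ≤ 1) :
    ‖t * a + (1 - t) * c‖ ^ 2 ≤ (max ‖a‖ ‖c‖) ^ 2
      + 2 * (‖t * a - a * t‖ * ‖c‖ + ‖a‖ * ‖t * c - c * t‖
          + 2 * ‖cfc Real.sqrt (t - t ^ 2) * (a * star c)
              - (a * star c) * cfc Real.sqrt (t - t ^ 2)‖) := by
  obtain ⟨hs0, hsn⟩ := myS ht0 ht1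
  have htn : ‖t‖ ≤ 1 := (CStarAlgebra.norm_le_one_iff_of_nonneg t ht0).mpr ht1
  have hsa : IsSelfAdjoint t := .of_nonneg ht0
  have hst : star t = t := hsa.star_eq
  have h1t0 : (0 : A) ≤ 1 - t := sub_nonneg.mpr ht1
  have h1tn : ‖(1 : A) - t‖ ≤ 1 :=
    (CStarAlgebra.norm_le_one_iff_of_nonneg _ h1t0).mpr (by simpa using ht0)
  have hst1 : star ((1 : A) - t) = 1 - t := by simp [star_sub, hst]
  set w := a * star c with hw
  set r := cfc Real.sqrt (t - t ^ 2) with hrdef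
  have hr0 : (0 : A) ≤ r := cfc_nonneg fun y _ => Real.sqrt_nonneg y
  have hsr : star r = r := (IsSelfAdjoint.of_nonneg hr0).star_eq
  have hssa : IsSelfAdjoint (t - t ^ 2) := .of_nonneg hs0
  have hr2 : r * r = t - t ^ 2 := by
    rw [hrdef, ← cfc_mul Real.sqrt Real.sqrt (t - t ^ 2) (by fun_prop) (by fun_prop)]
    have : (spectrum ℝ (t - t ^ 2)).EqOn (fun y => Real.sqrt y * Real.sqrt y) (fun y => y) :=
      fun y hy => Real.mul_self_sqrt (spectrum_nonneg_of_nonneg hs0 hy)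
    rw [cfc_congr this, cfc_id' (R := ℝ) (t - t ^ 2)]
  have hrn : ‖r‖ ≤ 1 := by
    refine norm_cfc_le zero_le_one fun y hy => ?_
    obtain ⟨h0, h1⟩ := mySpec hs0 hsn hy
    rw [Real.norm_eq_abs, abs_of_nonneg (Real.sqrt_nonneg y)]
    exact Real.sqrt_le_one.mpr h1
  set x := t * a + (1 - t) * c with hx
  set E := t * a * star c * (1 - t) - r * w * r with hE
  set E₂ := (1 - t) * (c * star a) * t - r * (c * star a) * r with hE₂
  have hE2star : E₂ = star E := by
    rw [hE₂, hE, hw]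
    simp only [star_sub, star_mul, hst, hst1, hsr, star_star]
    noncomm_ring
  have hxx : x * star x = t * (a * star a) * t + (1 - t) * (c * star c) * (1 - t)
      + r * (w + star w) * r + (E + E₂) := by
    have hsw : star w = c * star a := by rw [hw]; simp [star_mul]
    have hsx : star x = star a * t + star c * (1 - t) := by
      rw [hx]; simp [star_add, star_mul, hst, hst1]
    rw [hsx, hsw, hx, hE, hE₂, hw]
    noncomm_ring
  -- the three upper bounds
  have haa : t * (a * star a) * t ≤ algebraMap ℝ A (‖a‖ ^ 2) * t ^ 2 := by
    calc t * (a * star a) * t = star t * (a * star a) * t := by rw [hst]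
      _ ≤ star t * algebraMap ℝ A (‖a‖ ^ 2) * t :=
          star_left_conjugate_le_conjugate CStarAlgebra.mul_star_le_algebraMap_norm_sq t
      _ = algebraMap ℝ A (‖a‖ ^ 2) * t ^ 2 := by
          rw [hst, ← Algebra.commutes (‖a‖ ^ 2) t, mul_assoc, ← pow_two]
  have hcc : (1 - t) * (c * star c) * (1 - t) ≤ algebraMap ℝ A (‖c‖ ^ 2) * (1 - t) ^ 2 := by
    calc (1 - t) * (c * star c) * (1 - t) = star (1 - t) * (c * star c) * (1 - t) := by rw [hst1]
      _ ≤ star (1 - t) * algebraMap ℝ A (‖c‖ ^ 2) * (1 - t) :=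
          star_left_conjugate_le_conjugate CStarAlgebra.mul_star_le_algebraMap_norm_sq (1 - t)
      _ = algebraMap ℝ A (‖c‖ ^ 2) * (1 - t) ^ 2 := by
          rw [hst1, ← Algebra.commutes (‖c‖ ^ 2) (1 - t), mul_assoc, ← pow_two]
  have hwsa : IsSelfAdjoint (w + star w) := by
    rw [IsSelfAdjoint, star_add, star_star, add_comm]
  have hwn : ‖w + star w‖ ≤ 2 * ‖a‖ * ‖c‖ := by
    calc ‖w + star w‖ ≤ ‖w‖ + ‖star w‖ := norm_add_le _ _
      _ = ‖w‖ + ‖w‖ := by rw [norm_star]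
      _ ≤ (‖a‖ * ‖c‖) + (‖a‖ * ‖c‖) := by
          have : ‖w‖ ≤ ‖a‖ * ‖c‖ := by
            rw [hw]; exact (norm_mul_le _ _).trans (by rw [norm_star])
          exact add_le_add this this
      _ = 2 * ‖a‖ * ‖c‖ := by ring
  have hww : r * (w + star w) * r ≤ algebraMap ℝ A (2 * ‖a‖ * ‖c‖) * (t - t ^ 2) := by
    calc r * (w + star w) * r = star r * (w + star w) * r := by rw [hsr]
      _ ≤ star r * algebraMap ℝ A (2 * ‖a‖ * ‖c‖) * r :=
          star_left_conjugate_le_conjugate (myLeAlg hwsa hwn) r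
      _ = algebraMap ℝ A (2 * ‖a‖ * ‖c‖) * (r * r) := by
          rw [hsr, ← Algebra.commutes (2 * ‖a‖ * ‖c‖) r, mul_assoc]
      _ = algebraMap ℝ A (2 * ‖a‖ * ‖c‖) * (t - t ^ 2) := by rw [hr2]
  set P := algebraMap ℝ A (‖a‖ ^ 2) * t ^ 2 + algebraMap ℝ A (‖c‖ ^ 2) * (1 - t) ^ 2
      + algebraMap ℝ A (2 * ‖a‖ * ‖c‖) * (t - t ^ 2) with hP
  have hD : x * star x ≤ P + (E + E₂) := by
    rw [hxx, hP]
    have h1 := add_le_add (add_le_add haa hcc) hww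
    calc t * (a * star a) * t + (1 - t) * (c * star c) * (1 - t) + r * (w + star w) * r + (E + E₂)
        ≤ algebraMap ℝ A (‖a‖ ^ 2) * t ^ 2 + algebraMap ℝ A (‖c‖ ^ 2) * (1 - t) ^ 2
          + algebraMap ℝ A (2 * ‖a‖ * ‖c‖) * (t - t ^ 2) + (E + E₂) :=
          add_le_add_left h1 _
      _ = _ := rfl
  have hPn : ‖P‖ ≤ (max ‖a‖ ‖c‖) ^ 2 := by
    have hPeq : P = cfc (fun y : ℝ =>
        ‖a‖ ^ 2 * y ^ 2 + ‖c‖ ^ 2 * (1 - y) ^ 2 + 2 * ‖a‖ * ‖c‖ * (y - y ^ 2)) t := by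
      have e1 : cfc (fun y : ℝ => ‖a‖ ^ 2 * y ^ 2) t = algebraMap ℝ A (‖a‖ ^ 2) * t ^ 2 := by
        rw [cfc_const_mul (‖a‖ ^ 2) (fun y : ℝ => y ^ 2) t (by fun_prop), cfc_pow_id t 2]
        exact Algebra.smul_def _ _
      have e2 : cfc (fun y : ℝ => ‖c‖ ^ 2 * (1 - y) ^ 2) t
          = algebraMap ℝ A (‖c‖ ^ 2) * (1 - t) ^ 2 := by
        rw [cfc_const_mul (‖c‖ ^ 2) (fun y : ℝ => (1 - y) ^ 2) t (by fun_prop),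
          Algebra.smul_def]
        congr 1
        rw [cfc_pow (fun y : ℝ => 1 - y) 2 (a := t) (by fun_prop)]
        congr 1
        rw [cfc_sub (fun _ : ℝ => (1 : ℝ)) (fun y : ℝ => y) t (by fun_prop) (by fun_prop),
          cfc_const_one ℝ t, cfc_id' (R := ℝ) t]
      have e3 : cfc (fun y : ℝ => 2 * ‖a‖ * ‖c‖ * (y - y ^ 2)) t
          = algebraMap ℝ A (2 * ‖a‖ * ‖c‖) * (t - t ^ 2) := by
        rw [cfc_const_mul (2 * ‖a‖ * ‖c‖) (fun y : ℝ => y - y ^ 2) t (by fun_prop),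
          Algebra.smul_def]
        congr 1
        rw [cfc_sub (fun y : ℝ => y) (fun y : ℝ => y ^ 2) t (by fun_prop) (by fun_prop),
          cfc_id' (R := ℝ) t, cfc_pow_id t 2]
      rw [hP, ← e1, ← e2, ← e3,
        cfc_add (a := t) (f := fun y : ℝ => ‖a‖ ^ 2 * y ^ 2 + ‖c‖ ^ 2 * (1 - y) ^ 2)
          (g := fun y : ℝ => 2 * ‖a‖ * ‖c‖ * (y - y ^ 2)) (by fun_prop) (by fun_prop),
        cfc_add (a := t) (f := fun y : ℝ => ‖a‖ ^ 2 * y ^ 2)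
          (g := fun y : ℝ => ‖c‖ ^ 2 * (1 - y) ^ 2) (by fun_prop) (by fun_prop)]
    rw [hPeq]
    refine norm_cfc_le (by positivity) fun y hy => ?_
    obtain ⟨h0, h1⟩ := mySpec ht0 htn hy
    have key : ‖a‖ ^ 2 * y ^ 2 + ‖c‖ ^ 2 * (1 - y) ^ 2 + 2 * ‖a‖ * ‖c‖ * (y - y ^ 2)
        = (‖a‖ * y + ‖c‖ * (1 - y)) ^ 2 := by ring
    rw [Real.norm_eq_abs, key, abs_of_nonneg (sq_nonneg _)]
    have hM : ‖a‖ * y + ‖c‖ * (1 - y) ≤ max ‖a‖ ‖c‖ := by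
      have h2 : ‖a‖ * y ≤ max ‖a‖ ‖c‖ * y :=
        mul_le_mul_of_nonneg_right (le_max_left _ _) h0
      have h3 : ‖c‖ * (1 - y) ≤ max ‖a‖ ‖c‖ * (1 - y) :=
        mul_le_mul_of_nonneg_right (le_max_right _ _) (by linarith)
      nlinarith
    have hM0 : (0 : ℝ) ≤ ‖a‖ * y + ‖c‖ * (1 - y) := by
      have := norm_nonneg a; have := norm_nonneg c; nlinarith
    nlinarith
  -- bound on the error term E
  have hE1 : ‖E‖ ≤ ‖t * a - a * t‖ * ‖c‖ + ‖a‖ * ‖t * c - c * t‖ + 2 * ‖r * w - w * r‖ := by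
    have hz : t - t * t - r * r = 0 := by rw [hr2, pow_two]; abel
    have hgen : E = (t * a - a * t) * (star c * (1 - t))
        + a * ((t * star c - star c * t) * (1 - t))
        + (w * r - r * w) * r + w * (t - t * t - r * r) := by
      rw [hE, hw]; noncomm_ring
    rw [hgen, hz, mul_zero, add_zero]
    have hcstar : ‖t * star c - star c * t‖ = ‖t * c - c * t‖ := by
      have h9 : t * star c - star c * t = -star (t * c - c * t) := by
        simp only [star_sub, star_mul, hst]; abel
      rw [h9, norm_neg, norm_star]
    have b1 : ‖(t * a - a * t) * (star c * (1 - t))‖ ≤ ‖t * a - a * t‖ * ‖c‖ := by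
      refine (norm_mul_le _ _).trans ?_
      refine mul_le_mul_of_nonneg_left ?_ (norm_nonneg _)
      calc ‖star c * (1 - t)‖ ≤ ‖star c‖ * ‖1 - t‖ := norm_mul_le _ _
        _ ≤ ‖c‖ * 1 := by rw [norm_star]; exact mul_le_mul_of_nonneg_left h1tn (norm_nonneg c)
        _ = ‖c‖ := mul_one _
    have b2 : ‖a * ((t * star c - star c * t) * (1 - t))‖ ≤ ‖a‖ * ‖t * c - c * t‖ := by
      refine (norm_mul_le _ _).trans ?_
      refine mul_le_mul_of_nonneg_left ?_ (norm_nonneg _)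
      calc ‖(t * star c - star c * t) * (1 - t)‖ ≤ ‖t * star c - star c * t‖ * ‖1 - t‖ :=
            norm_mul_le _ _
        _ ≤ ‖t * c - c * t‖ * 1 := by
            rw [hcstar]; exact mul_le_mul_of_nonneg_left h1tn (norm_nonneg _)
        _ = ‖t * c - c * t‖ := mul_one _
    have b3 : ‖(w * r - r * w) * r‖ ≤ 2 * ‖r * w - w * r‖ := by
      calc ‖(w * r - r * w) * r‖ ≤ ‖w * r - r * w‖ * ‖r‖ := norm_mul_le _ _
        _ ≤ ‖w * r - r * w‖ * 1 := mul_le_mul_of_nonneg_left hrn (norm_nonneg _)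
        _ = ‖r * w - w * r‖ := by rw [mul_one, norm_sub_rev]
        _ ≤ 2 * ‖r * w - w * r‖ := by nlinarith [norm_nonneg (r * w - w * r)]
    calc ‖(t * a - a * t) * (star c * (1 - t)) + a * ((t * star c - star c * t) * (1 - t))
          + (w * r - r * w) * r‖
        ≤ ‖(t * a - a * t) * (star c * (1 - t)) + a * ((t * star c - star c * t) * (1 - t))‖
          + ‖(w * r - r * w) * r‖ := norm_add_le _ _
      _ ≤ (‖(t * a - a * t) * (star c * (1 - t))‖
          + ‖a * ((t * star c - star c * t) * (1 - t))‖) + ‖(w * r - r * w) * r‖ :=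
          add_le_add_left (norm_add_le _ _) _
      _ ≤ ‖t * a - a * t‖ * ‖c‖ + ‖a‖ * ‖t * c - c * t‖ + 2 * ‖r * w - w * r‖ :=
          add_le_add (add_le_add b1 b2) b3
  have hE2n : ‖E₂‖ = ‖E‖ := by rw [hE2star, norm_star]
  calc ‖x‖ ^ 2 = ‖x * star x‖ := by rw [CStarRing.norm_self_mul_star, pow_two]
    _ ≤ ‖P + (E + E₂)‖ :=
        CStarAlgebra.norm_le_norm_of_nonneg_of_le (mul_star_self_nonneg x) hD
    _ ≤ ‖P‖ + (‖E‖ + ‖E₂‖) := (norm_add_le _ _).trans (by gcongr; exact norm_add_le _ _)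
    _ ≤ (max ‖a‖ ‖c‖) ^ 2 + 2 * (‖t * a - a * t‖ * ‖c‖ + ‖a‖ * ‖t * c - c * t‖
          + 2 * ‖r * w - w * r‖) := by rw [hE2n]; linarith

end Aux

/-- If `(e_α)` is a quasi-central approximate unit for a closed two-sided ideal `I` of a
unital C*-algebra `A`, then for all `a b ∈ A`,
`limsup_α ‖e_α a + (1 − e_α) b‖ ≤ max (‖a‖, dist(b, I))`. -/
theorem stmt9 {A : Type*} [CStarAlgebra A] [PartialOrder A] [StarOrderedRing A]
    (I : TwoSidedIdeal A) (hI : IsClosed (I : Set A))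
    {ι : Type*} [Preorder ι] [Nonempty ι] [IsDirected ι (· ≤ ·)]
    (e : ι → A)
    (he_mem : ∀ α, e α ∈ I) (he_pos : ∀ α, 0 ≤ e α) (he_norm : ∀ α, ‖e α‖ ≤ 1)
    (he_unit : ∀ b ∈ I, Tendsto (fun α => ‖e α * b - b‖) atTop (nhds 0))
    (he_comm : ∀ a : A, Tendsto (fun α => ‖e α * a - a * e α‖) atTop (nhds 0))
    (a b : A) :
    limsup (fun α => ‖e α * a + (1 - e α) * b‖) atTop
      ≤ max ‖a‖ (Metric.infDist b (I : Set A)) := by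
  have hNeBot : (atTop : Filter ι).NeBot := atTop_neBot
  have hRHS0 : (0 : ℝ) ≤ max ‖a‖ (Metric.infDist b (I : Set A)) :=
    le_max_of_le_right Metric.infDist_nonneg
  rcases subsingleton_or_nontrivial A with hA | hA
  · have h0 : (fun α => ‖e α * a + (1 - e α) * b‖) = fun _ => (0 : ℝ) := by
      funext α
      rw [Subsingleton.elim (e α * a + (1 - e α) * b) 0, norm_zero]
    rw [h0, limsup_const]
    exact hRHS0
  -- nontrivial case
  have he1 : ∀ α, e α ≤ 1 := fun α =>
    (CStarAlgebra.norm_le_one_iff_of_nonneg _ (he_pos α)).mp (he_norm α)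
  have h1en : ∀ α, ‖(1 : A) - e α‖ ≤ 1 := fun α =>
    (CStarAlgebra.norm_le_one_iff_of_nonneg _ (sub_nonneg.mpr (he1 α))).mpr
      (by simpa using he_pos α)
  have hcob : IsCoboundedUnder (· ≤ ·) (atTop : Filter ι)
      (fun α => ‖e α * a + (1 - e α) * b‖) :=
    isCoboundedUnder_le_of_le atTop (x := 0) fun α => norm_nonneg _
  set d := Metric.infDist b (I : Set A) with hd
  refine _root_.le_of_forall_pos_le_add fun ε hε => ?_
  set M := max ‖a‖ d with hM
  have hM0 : (0 : ℝ) ≤ M := hRHS0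
  have hdM : d ≤ M := le_max_right _ _
  clear_value d M
  -- choose an approximant y ∈ I
  have hIne : (I : Set A).Nonempty := ⟨0, I.zero_mem⟩
  obtain ⟨y, hyI, hyd⟩ := (Metric.infDist_lt_iff hIne).mp
    (show Metric.infDist b (I : Set A) < d + ε / 4 by rw [← hd]; linarith)
  set c := b - y with hc
  have hcn : ‖c‖ < d + ε / 4 := by rw [hc, ← dist_eq_norm]; exact hyd
  set L := M + ε / 4 with hL
  clear_value c L
  have hL0 : (0 : ℝ) ≤ L := by linarith
  have haM : ‖a‖ ≤ M := hM ▸ le_max_left ‖a‖ d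
  have hM' : max ‖a‖ ‖c‖ ≤ L := by
    refine max_le ?_ ?_ <;> rw [hL] <;> linarith
  -- the error terms tend to zero
  set w := a * star c with hw
  clear_value w
  have hsα : ∀ α, 0 ≤ e α - (e α) ^ 2 ∧ ‖e α - (e α) ^ 2‖ ≤ 1 := fun α =>
    myS (he_pos α) (he1 α)
  have hcomm_s : Tendsto (fun α => ‖(e α - (e α) ^ 2) * w - w * (e α - (e α) ^ 2)‖)
      atTop (nhds 0) := by
    have hb : ∀ α, ‖(e α - (e α) ^ 2) * w - w * (e α - (e α) ^ 2)‖
        ≤ 3 * ‖e α * w - w * e α‖ := by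
      intro α
      set t := e α with ht
      have hid : (t - t ^ 2) * w - w * (t - t ^ 2)
          = (t * w - w * t) - (t * (t * w - w * t) + (t * w - w * t) * t) := by
        noncomm_ring
      rw [hid]
      calc ‖(t * w - w * t) - (t * (t * w - w * t) + (t * w - w * t) * t)‖
          ≤ ‖t * w - w * t‖ + ‖t * (t * w - w * t) + (t * w - w * t) * t‖ := norm_sub_le _ _
        _ ≤ ‖t * w - w * t‖ + (‖t * (t * w - w * t)‖ + ‖(t * w - w * t) * t‖) :=
            add_le_add_right (norm_add_le _ _) _
        _ ≤ ‖t * w - w * t‖ + (‖t‖ * ‖t * w - w * t‖ + ‖t * w - w * t‖ * ‖t‖) :=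
            add_le_add_right (add_le_add (norm_mul_le _ _) (norm_mul_le _ _)) _
        _ ≤ ‖t * w - w * t‖ + (1 * ‖t * w - w * t‖ + ‖t * w - w * t‖ * 1) := by
            have h1 := he_norm α
            rw [← ht] at h1
            exact add_le_add_right (add_le_add
              (mul_le_mul_of_nonneg_right h1 (norm_nonneg _))
              (mul_le_mul_of_nonneg_left h1 (norm_nonneg _))) _
        _ = 3 * ‖t * w - w * t‖ := by ring
    have h3 : Tendsto (fun α => 3 * ‖e α * w - w * e α‖) atTop (nhds 0) := by
      simpa using (he_comm w).const_mul 3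
    exact squeeze_zero (fun α => norm_nonneg _) hb h3
  have hδ₃ := myTendstoSqrtComm (fun α => e α - (e α) ^ 2) w
    (fun α => (hsα α).1) (fun α => (hsα α).2) hcomm_s
  have hy0 : Tendsto (fun α => ‖(1 - e α) * y‖) atTop (nhds 0) := by
    have hidy : (fun α => ‖(1 - e α) * y‖) = fun α => ‖e α * y - y‖ := by
      funext α
      have : (1 - e α) * y = -(e α * y - y) := by noncomm_ring
      rw [this, norm_neg]
    rw [hidy]
    exact he_unit y hyI
  set err := fun α => 2 * (‖e α * a - a * e α‖ * ‖c‖ + ‖a‖ * ‖e α * c - c * e α‖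
      + 2 * ‖cfc Real.sqrt (e α - (e α) ^ 2) * w - w * cfc Real.sqrt (e α - (e α) ^ 2)‖)
    with herrdef
  have herr : Tendsto err atTop (nhds 0) := by
    rw [herrdef]
    have h1 := (he_comm a).mul_const ‖c‖
    have h2 := (he_comm c).const_mul ‖a‖
    have h3 := hδ₃.const_mul 2
    have h4 := ((h1.add h2).add h3).const_mul 2
    simpa using h4
  -- eventual bounds
  have hgap : (0:ℝ) < (M + ε / 2) ^ 2 - L ^ 2 := by rw [hL]; nlinarith
  have hev1 : ∀ᶠ α in atTop, err α < (M + ε / 2) ^ 2 - L ^ 2 := by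
    have := Metric.tendsto_nhds.mp herr _ hgap
    filter_upwards [this] with α hα
    rw [Real.dist_eq, sub_zero] at hα
    exact (le_abs_self _).trans_lt hα
  have hev2 : ∀ᶠ α in atTop, ‖(1 - e α) * y‖ < ε / 2 := by
    have := Metric.tendsto_nhds.mp hy0 (ε / 2) (by linarith)
    filter_upwards [this] with α hα
    rw [Real.dist_eq, sub_zero] at hα
    exact (le_abs_self _).trans_lt hα
  refine limsup_le_of_le hcob ?_
  filter_upwards [hev1, hev2] with α h1 h2
  have hkey := myKey (e α) a c (he_pos α) (he1 α)
  have hg2 : ‖e α * a + (1 - e α) * c‖ ^ 2 ≤ L ^ 2 + err α := by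
    refine hkey.trans ?_
    have hsq : (max ‖a‖ ‖c‖) ^ 2 ≤ L ^ 2 := by
      have h0 : (0:ℝ) ≤ max ‖a‖ ‖c‖ := le_max_of_le_left (norm_nonneg a)
      nlinarith
    simp only [herrdef, hw]
    linarith
  have hg : ‖e α * a + (1 - e α) * c‖ ≤ M + ε / 2 := by
    nlinarith [norm_nonneg (e α * a + (1 - e α) * c), hg2, h1]
  have hsplit : e α * a + (1 - e α) * b = (e α * a + (1 - e α) * c) + (1 - e α) * y := by
    rw [hc]; noncomm_ring
  calc ‖e α * a + (1 - e α) * b‖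
      = ‖(e α * a + (1 - e α) * c) + (1 - e α) * y‖ := by rw [hsplit]
    _ ≤ ‖e α * a + (1 - e α) * c‖ + ‖(1 - e α) * y‖ := norm_add_le _ _
    _ ≤ (M + ε / 2) + ε / 2 := add_le_add hg h2.le
    _ = M + ε := by ring
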